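/- Let H be a real Hilbert space, A ⊆ H a nonempty bounded set, f : H → ℝ convex and Fréchet differentiable, δ ∈ (0,1], and C > 0 a curvature bound: f(x + γ(s − x)) ≤ f(x) + γ⟪∇f(x), s − x⟫ + (γ²/2)·C for all s ∈ A, x ∈ conv(A), and γ ∈ [0,1]. Let x⋆ ∈ conv(A) satisfy f(x⋆) ≤ f(w) for all w ∈ conv(A). Let (x_t)_{t≥0} be a sequence with x₀ ∈ conv(A) such that for every t there is z_t ∈ A with ⟪∇f(x_t), z_t − x_t⟫ ≤ δ·inf_{z∈A} ⟪∇f(x_t), z − x_t⟫, and x_{t+1} = x_t + γ_t (z_t − x_t) where γ_t := min(1, max(0, ⟪−∇f(x_t), z_t − x_t⟫ / C)). Then for every t ≥ 0, f(x_t) − f(x⋆) ≤ 2·((1/δ)·C + ε₀)/(δ·t + 2), where ε₀ := f(x₀) − f(x⋆). -/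

import Mathlib

open scoped RealInnerProductSpace Pointwise

/-- Gradient inequality for convex differentiable functions. -/
lemma aiFW_grad_ineq {H : Type*} [NormedAddCommGroup H] [InnerProductSpace ℝ H]
    [CompleteSpace H]
    {f : H → ℝ} (hconv : ConvexOn ℝ Set.univ f) {g x0 : H}
    (hd : HasGradientAt f g x0) (y : H) :
    f x0 + ⟪g, y - x0⟫ ≤ f y := by
  set φ : ℝ → ℝ := fun γ => f (AffineMap.lineMap x0 y γ) with hφ
  have hφconv : ConvexOn ℝ Set.univ φ := by
    have h := hconv.comp_affineMap (AffineMap.lineMap x0 y)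
    rw [Set.preimage_univ] at h
    exact h
  have hcurve : HasDerivAt (fun γ : ℝ => AffineMap.lineMap x0 y γ) (y - x0) 0 := by
    simp only [AffineMap.lineMap_apply_module']
    have : HasDerivAt (fun γ : ℝ => γ • (y - x0) + x0) ((1:ℝ) • (y - x0)) 0 :=
      ((hasDerivAt_id 0).smul_const (y - x0)).add_const x0
    simpa using this
  have hF : HasFDerivAt f (InnerProductSpace.toDual ℝ H g : H →L[ℝ] ℝ) x0 :=
    hasGradientAt_iff_hasFDerivAt.mp hd
  have hφd : HasDerivAt φ ⟪g, y - x0⟫ 0 := by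
    have h0 : AffineMap.lineMap x0 y (0:ℝ) = x0 := AffineMap.lineMap_apply_zero x0 y
    have := (h0 ▸ hF).comp_hasDerivAt 0 hcurve
    have h2 := this
    simp only [InnerProductSpace.toDual_apply_apply] at h2
    exact h2
  have := hφconv.le_slope_of_hasDerivAt (Set.mem_univ (0:ℝ)) (Set.mem_univ (1:ℝ))
    one_pos hφd
  have hs : slope φ 0 1 = f y - f x0 := by simp [slope, hφ]
  rw [hs] at this
  linarith

/-- The infimum of a linear functional over `A` bounds its values on the convex hull. -/
lemma aiFW_inf_le {H : Type*} [NormedAddCommGroup H] [InnerProductSpace ℝ H]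
    {A : Set H} (hAbdd : Bornology.IsBounded A) (v x : H) {w : H}
    (hw : w ∈ convexHull ℝ A) :
    sInf ((fun w => ⟪v, w - x⟫) '' A) ≤ ⟪v, w - x⟫ := by
  obtain ⟨R, hR⟩ := hAbdd.exists_norm_le
  have hbdd : BddBelow ((fun w => ⟪v, w - x⟫) '' A) := by
    refine ⟨-(‖v‖ * (R + ‖x‖)), ?_⟩
    rintro _ ⟨a, ha, rfl⟩
    have h1 : |⟪v, a - x⟫| ≤ ‖v‖ * ‖a - x‖ := abs_real_inner_le_norm v (a - x)
    have h2 : ‖a - x‖ ≤ R + ‖x‖ := (norm_sub_le a x).trans (by linarith [hR a ha])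
    have h3 : ‖v‖ * ‖a - x‖ ≤ ‖v‖ * (R + ‖x‖) :=
      mul_le_mul_of_nonneg_left h2 (norm_nonneg v)
    have := neg_abs_le ⟪v, a - x⟫
    dsimp only
    linarith
  set c := sInf ((fun w => ⟪v, w - x⟫) '' A) with hc
  have hconvS : Convex ℝ {w : H | c ≤ ⟪v, w - x⟫} := by
    have hset : {w : H | c ≤ ⟪v, w - x⟫} = {w : H | c + ⟪v, x⟫ ≤ ⟪v, w⟫} := by
      ext w
      simp only [Set.mem_setOf_eq, inner_sub_right]
      constructor <;> intro <;> linarith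
    rw [hset]
    exact convex_halfSpace_ge
      ⟨fun a b => inner_add_right v a b, fun r a => real_inner_smul_right v a r⟩ _
  have hsub : A ⊆ {w : H | c ≤ ⟪v, w - x⟫} := fun s hs => csInf_le hbdd ⟨s, hs, rfl⟩
  exact convexHull_min hsub hconvS hw

/-- The clipped step size minimizes the quadratic upper bound on `[0,1]`. -/
lemma aiFW_clip_quad {C u γ : ℝ} (hC : 0 < C) (h0 : 0 ≤ γ) (h1 : γ ≤ 1) :
    min 1 (max 0 (-u / C)) * u + (min 1 (max 0 (-u / C))) ^ 2 / 2 * C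
      ≤ γ * u + γ ^ 2 / 2 * C := by
  rcases le_total (-u / C) 0 with h | h
  · have hu : 0 ≤ u := by
      by_contra hu
      push_neg at hu
      have : 0 < -u / C := div_pos (by linarith) hC
      linarith
    rw [max_eq_left h, min_eq_right (by norm_num : (0:ℝ) ≤ 1)]
    nlinarith
  · rw [max_eq_right h]
    rcases le_total (-u / C) 1 with h2 | h2
    · rw [min_eq_right h2]
      have hval : -u / C * u + (-u / C) ^ 2 / 2 * C = -(u ^ 2) / (2 * C) := by
        field_simp; ring
      rw [hval, div_le_iff₀ (by positivity : (0:ℝ) < 2 * C)]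
      nlinarith [sq_nonneg (γ * C + u)]
    · rw [min_eq_left h2]
      have hu : u ≤ -C := by
        have := (le_div_iff₀ hC).mp h2
        linarith
      nlinarith [mul_nonneg (sub_nonneg.mpr h1) (by linarith : (0:ℝ) ≤ -u - C),
        mul_nonneg hC.le (sq_nonneg (1 - γ))]

/-- Sublinear convergence of the Affine Invariant Frank–Wolfe algorithm under a curvature
bound `C` (Theorem 6 / `thm:sublinearFWAffineInvariant`). -/
theorem affineInvariantFrankWolfe_sublinear_convergence
    {H : Type*} [NormedAddCommGroup H] [InnerProductSpace ℝ H] [CompleteSpace H]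
    (A : Set H) (hA : A.Nonempty) (hAbdd : Bornology.IsBounded A)
    (f : H → ℝ) (f' : H → H)
    (hconv : ConvexOn ℝ Set.univ f)
    (hdiff : ∀ w : H, HasGradientAt f (f' w) w)
    (δ : ℝ) (hδ : δ ∈ Set.Ioc (0:ℝ) 1)
    (C : ℝ) (hC : 0 < C)
    (hcurv : ∀ s ∈ A, ∀ x ∈ convexHull ℝ A, ∀ γ ∈ Set.Icc (0:ℝ) 1,
        f (x + γ • (s - x)) ≤ f x + γ * ⟪f' x, s - x⟫ + γ ^ 2 / 2 * C)
    (xstar : H) (hxstar : xstar ∈ convexHull ℝ A)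
    (hmin : ∀ w ∈ convexHull ℝ A, f xstar ≤ f w)
    (x z : ℕ → H)
    (hx0 : x 0 ∈ convexHull ℝ A)
    (hzA : ∀ t, z t ∈ A)
    (hlmo : ∀ t, ⟪f' (x t), z t - x t⟫ ≤ δ * sInf ((fun w => ⟪f' (x t), w - x t⟫) '' A))
    (hupd : ∀ t, x (t + 1) =
        x t + min 1 (max 0 (⟪-f' (x t), z t - x t⟫ / C)) • (z t - x t)) :
    ∀ t : ℕ, f (x t) - f xstar ≤
      2 * ((1 / δ) * C + (f (x 0) - f xstar)) / (δ * t + 2) := by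
  obtain ⟨hδ0, hδ1⟩ := hδ
  set K : ℝ := (1 / δ) * C + (f (x 0) - f xstar) with hK
  have hh0 : 0 ≤ f (x 0) - f xstar := by linarith [hmin (x 0) hx0]
  have hK0 : 0 ≤ K := by
    have : 0 ≤ (1 / δ) * C := by positivity
    simp only [hK]; linarith
  have hδK : C ≤ δ * K := by
    have h1 : δ * ((1 / δ) * C) = C := by field_simp
    have : δ * K = C + δ * (f (x 0) - f xstar) := by rw [hK]; rw [mul_add, h1]
    nlinarith
  suffices key : ∀ t : ℕ, x t ∈ convexHull ℝ A ∧
      f (x t) - f xstar ≤ 2 * K / (δ * t + 2) from fun t => (key t).2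
  intro t
  induction t with
  | zero =>
    refine ⟨hx0, ?_⟩
    have h2 : δ * ((0:ℕ):ℝ) + 2 = 2 := by norm_num
    rw [h2]
    have : 0 ≤ (1 / δ) * C := by positivity
    simp only [hK]
    linarith
  | succ t ih =>
    obtain ⟨hmem, hbound⟩ := ih
    -- notation
    set u : ℝ := ⟪f' (x t), z t - x t⟫ with hu
    have hnegu : ⟪-f' (x t), z t - x t⟫ = -u := by rw [inner_neg_left]
    set γs : ℝ := min 1 (max 0 (-u / C)) with hγs
    have hγs0 : 0 ≤ γs := le_min zero_le_one (le_max_left 0 _)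
    have hγs1 : γs ≤ 1 := min_le_left _ _
    -- membership of the next iterate
    have hzhull : z t ∈ convexHull ℝ A := subset_convexHull ℝ A (hzA t)
    have hxt1 : x (t + 1) = x t + γs • (z t - x t) := by rw [hupd t, hnegu]
    have hcomb : x t + γs • (z t - x t) = (1 - γs) • x t + γs • z t := by
      rw [smul_sub, sub_smul, one_smul]; abel
    have hmem1 : x (t + 1) ∈ convexHull ℝ A := by
      rw [hxt1, hcomb]
      exact (convex_convexHull ℝ A) hmem hzhull (by linarith) hγs0 (by ring)
    refine ⟨hmem1, ?_⟩
    -- the duality gap bound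
    have hgap : u ≤ δ * (f xstar - f (x t)) := by
      have h1 : sInf ((fun w => ⟪f' (x t), w - x t⟫) '' A) ≤ ⟪f' (x t), xstar - x t⟫ :=
        aiFW_inf_le hAbdd (f' (x t)) (x t) hxstar
      have h2 : f (x t) + ⟪f' (x t), xstar - x t⟫ ≤ f xstar :=
        aiFW_grad_ineq hconv (hdiff (x t)) xstar
      have h3 : ⟪f' (x t), xstar - x t⟫ ≤ f xstar - f (x t) := by linarith
      calc u ≤ δ * sInf ((fun w => ⟪f' (x t), w - x t⟫) '' A) := hlmo t
        _ ≤ δ * ⟪f' (x t), xstar - x t⟫ := by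
            exact mul_le_mul_of_nonneg_left h1 hδ0.le
        _ ≤ δ * (f xstar - f (x t)) := mul_le_mul_of_nonneg_left h3 hδ0.le
    -- descent with the actual step
    have hdesc : f (x (t + 1)) ≤ f (x t) + γs * u + γs ^ 2 / 2 * C := by
      rw [hxt1]
      exact hcurv (z t) (hzA t) (x t) hmem (γs) ⟨hγs0, hγs1⟩
    -- comparison γ
    set a : ℝ := δ * t + 2 with ha
    have ha2 : 2 ≤ a := by
      have : 0 ≤ δ * (t:ℝ) := by positivity
      simp only [ha]; linarith
    have ha0 : (0:ℝ) < a := by linarith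
    set γ : ℝ := 2 / a with hγ
    have hγ0 : 0 ≤ γ := by positivity
    have hγ1 : γ ≤ 1 := by rw [hγ, div_le_one ha0]; linarith
    have hquad : γs * u + γs ^ 2 / 2 * C ≤ γ * u + γ ^ 2 / 2 * C :=
      aiFW_clip_quad hC hγ0 hγ1
    -- put things together
    set h : ℝ := f (x t) - f xstar with hh
    have hhnn : 0 ≤ h := by simp only [hh]; linarith [hmin (x t) hmem]
    have hstep : f (x (t + 1)) - f xstar ≤ h * (1 - γ * δ) + γ ^ 2 / 2 * C := by
      have h4 : γ * u ≤ γ * (δ * (f xstar - f (x t))) :=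
        mul_le_mul_of_nonneg_left hgap hγ0
      have h5 : f (x t) = h + f xstar := by simp only [hh]; ring
      have h6 : h * (1 - γ * δ) = h - γ * (δ * h) := by ring
      have h7 : γ * (δ * (f xstar - f (x t))) = -(γ * (δ * h)) := by
        simp only [hh]; ring
      rw [h7] at h4
      linarith [hdesc, hquad]
    have hγδ : γ * δ ≤ 1 := by
      have : γ * δ ≤ 1 * 1 := mul_le_mul hγ1 hδ1 hδ0.le zero_le_one
      linarith
    have hmono : h * (1 - γ * δ) ≤ (2 * K / a) * (1 - γ * δ) :=
      mul_le_mul_of_nonneg_right hbound (by linarith)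
    -- the key numeric inequality
    have hnum : (2 * K / a) * (1 - γ * δ) + γ ^ 2 / 2 * C ≤ 2 * K / (a + δ) := by
      have haδ : (0:ℝ) < a + δ := by linarith
      have hcollect : (2 * K / a) * (1 - γ * δ) + γ ^ 2 / 2 * C
          = (2 * K * (a - 2 * δ) + 2 * C) / a ^ 2 := by
        rw [hγ]; field_simp
      rw [hcollect, div_le_div_iff₀ (by positivity) haδ]
      have e1 : 0 ≤ a * (δ * K - C) := mul_nonneg (by linarith) (by linarith)
      have e2 : 0 ≤ δ * (2 * δ * K - C) := by
        have : 0 ≤ δ * K := mul_nonneg hδ0.le hK0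
        exact mul_nonneg hδ0.le (by linarith)
      linarith [e1, e2]
    have hfin : f (x (t + 1)) - f xstar ≤ 2 * K / (a + δ) := by linarith
    have hcast : δ * ((t:ℝ) + 1) + 2 = a + δ := by rw [ha]; ring
    push_cast
    rw [hcast]
    exact hfin
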